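/- For every β > 0 and every x ∈ [0,1], there exists a unique y ∈ (0,1) satisfying tanh(βxy) = 1 - 2y. Moreover, the resulting function h(x) = y satisfies h(0) = 1/2, is decreasing, and h'(x) = -β h(x)/(βx + 2cosh²(βx h(x))) ≥ -β/2 for all x ∈ [0,1]. -/

import Mathlib

open Real Set

lemma tanh_hasDerivAt (x : ℝ) : HasDerivAt Real.tanh (1 / Real.cosh x ^ 2) x := by
  have h := (Real.hasDerivAt_sinh x).div (Real.hasDerivAt_cosh x) (ne_of_gt (Real.cosh_pos x))
  have hfun : Real.tanh = fun y => Real.sinh y / Real.cosh y :=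
    funext fun y => Real.tanh_eq_sinh_div_cosh y
  rw [hfun]
  refine h.congr_deriv ?_
  have := Real.cosh_sq_sub_sinh_sq x
  rw [div_left_inj' (pow_ne_zero 2 (Real.cosh_pos x).ne')]
  nlinarith [Real.cosh_pos x]

lemma tanh_continuous : Continuous Real.tanh :=
  continuous_iff_continuousAt.2 fun x => (tanh_hasDerivAt x).continuousAt

lemma tanh_strictMono : StrictMono Real.tanh := by
  apply strictMono_of_deriv_pos
  intro x
  rw [(tanh_hasDerivAt x).deriv]
  positivity

lemma abs_tanh_lt_one (x : ℝ) : |Real.tanh x| < 1 := by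
  rw [Real.tanh_eq_sinh_div_cosh, abs_div, abs_of_pos (Real.cosh_pos x),
    div_lt_one (Real.cosh_pos x)]
  have h1 := Real.cosh_sq_sub_sinh_sq x
  nlinarith [sq_abs (Real.sinh x), Real.cosh_pos x, abs_nonneg (Real.sinh x)]

lemma one_sub_tanh_sq (x : ℝ) : 1 - Real.tanh x ^ 2 = 1 / Real.cosh x ^ 2 := by
  have h1 := Real.cosh_sq_sub_sinh_sq x
  rw [Real.tanh_eq_sinh_div_cosh]
  field_simp
  linarith

lemma exists_unique_sol (β x : ℝ) (hβ : 0 < β) (hx : 0 ≤ x) :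
    ∃! y : ℝ, y ∈ Set.Ioo (0 : ℝ) 1 ∧ Real.tanh (β * x * y) = 1 - 2 * y := by
  set f : ℝ → ℝ := fun y => Real.tanh (β * x * y) + 2 * y with hf
  have hmono : StrictMono f := by
    intro y₁ y₂ hy
    have h1 : Real.tanh (β * x * y₁) ≤ Real.tanh (β * x * y₂) :=
      tanh_strictMono.monotone (by nlinarith [mul_nonneg hβ.le hx])
    simp only [hf]
    linarith
  have hcont : Continuous f := by
    apply Continuous.add
    · exact tanh_continuous.comp (by continuity)
    · continuity
  have h0 : f 0 = 0 := by simp [hf, Real.tanh_zero]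
  have h1 : 1 < f 1 := by
    have := _root_.abs_tanh_lt_one (β * x * 1)
    rw [abs_lt] at this
    simp only [hf]
    linarith
  have hIVT : (1 : ℝ) ∈ f '' Set.Ioo 0 1 := by
    apply intermediate_value_Ioo (by norm_num) hcont.continuousOn
    rw [h0]
    exact ⟨by norm_num, h1⟩
  obtain ⟨y, hy, hfy⟩ := hIVT
  refine ⟨y, ⟨hy, by simp only [hf] at hfy; linarith⟩, ?_⟩
  rintro z ⟨hz, hez⟩
  have hfz : f z = 1 := by simp only [hf]; linarith
  exact hmono.injective (hfz.trans hfy.symm)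

lemma key_lemma (β x₁ x₂ h₁ h₂ : ℝ) (hβ : 0 < β) (hx₁ : 0 ≤ x₁) (hx₂ : 0 ≤ x₂)
    (hh₁ : h₁ ∈ Set.Ioo (0 : ℝ) 1) (hh₂ : h₂ ∈ Set.Ioo (0 : ℝ) 1)
    (e₁ : Real.tanh (β * x₁ * h₁) = 1 - 2 * h₁)
    (e₂ : Real.tanh (β * x₂ * h₂) = 1 - 2 * h₂) :
    ∃ p : ℝ, 0 < p ∧ p ≤ 1 ∧ |p - 1 / Real.cosh (β * x₁ * h₁) ^ 2| ≤ 4 * |h₂ - h₁| ∧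
      (h₂ - h₁) * (2 + β * x₂ * p) = -(p * β * h₁) * (x₂ - x₁) := by
  set a₁ := β * x₁ * h₁ with ha₁
  set a₂ := β * x₂ * h₂ with ha₂
  have hq1 : (1 : ℝ) ≤ Real.cosh a₁ ^ 2 := by nlinarith [Real.one_le_cosh a₁]
  have hqpos : 0 < 1 / Real.cosh a₁ ^ 2 := by positivity
  rcases eq_or_ne a₁ a₂ with heq | hne
  · -- equal arguments: h₁ = h₂ and x₁ = x₂
    have hh : h₁ = h₂ := by
      have : Real.tanh a₁ = Real.tanh a₂ := by rw [heq]
      rw [e₁, e₂] at this; linarith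
    have hx : x₁ = x₂ := by
      rw [ha₁, ha₂, ← hh] at heq
      have h' := mul_right_cancel₀ (ne_of_gt hh₁.1) heq
      exact mul_left_cancel₀ hβ.ne' h'
    refine ⟨1 / Real.cosh a₁ ^ 2, hqpos, by
      rw [div_le_one (by positivity)]; exact hq1, by simp, by rw [hh, hx]; ring⟩
  · -- distinct arguments: use MVT
    have main : ∀ b₁ b₂ : ℝ, b₁ < b₂ →
        ∃ c ∈ Set.Ioo b₁ b₂, 1 / Real.cosh c ^ 2 =
          (Real.tanh b₂ - Real.tanh b₁) / (b₂ - b₁) := fun b₁ b₂ hb =>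
      exists_hasDerivAt_eq_slope Real.tanh (fun y => 1 / Real.cosh y ^ 2) hb
        tanh_continuous.continuousOn (fun y _ => tanh_hasDerivAt y)
    -- handle both orders
    have key : ∃ c, (Real.tanh c - Real.tanh a₁) ^ 2 ≤ (Real.tanh a₂ - Real.tanh a₁) ^ 2 ∧
        (1 / Real.cosh c ^ 2) * (a₂ - a₁) = Real.tanh a₂ - Real.tanh a₁ := by
      rcases hne.lt_or_gt with hlt | hlt
      · obtain ⟨c, hc, hceq⟩ := main a₁ a₂ hlt
        refine ⟨c, ?_, by
          rw [hceq, div_mul_cancel₀ _ (sub_ne_zero.2 hlt.ne')]⟩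
        have h1 := tanh_strictMono hc.1
        have h2 := tanh_strictMono hc.2
        nlinarith
      · obtain ⟨c, hc, hceq⟩ := main a₂ a₁ hlt
        refine ⟨c, ?_, by
          have hrw : (Real.tanh a₁ - Real.tanh a₂) / (a₁ - a₂)
              = (Real.tanh a₂ - Real.tanh a₁) / (a₂ - a₁) := by
            rw [← neg_div_neg_eq]; ring_nf
          rw [hceq, hrw, div_mul_cancel₀ _ (sub_ne_zero.2 hlt.ne)]⟩
        have h1 := tanh_strictMono hc.1
        have h2 := tanh_strictMono hc.2
        nlinarith
    obtain ⟨c, hcsq, hceq⟩ := key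
    have hcq1 : (1 : ℝ) ≤ Real.cosh c ^ 2 := by nlinarith [Real.one_le_cosh c]
    have hppos : 0 < 1 / Real.cosh c ^ 2 := by positivity
    refine ⟨1 / Real.cosh c ^ 2, hppos, by rw [div_le_one (by positivity)]; exact hcq1, ?_, ?_⟩
    · -- |p - q| ≤ 4 |h₂ - h₁|
      have hp : 1 / Real.cosh c ^ 2 = 1 - Real.tanh c ^ 2 := (one_sub_tanh_sq c).symm
      have hq : 1 / Real.cosh a₁ ^ 2 = 1 - Real.tanh a₁ ^ 2 := (one_sub_tanh_sq a₁).symm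
      rw [hp, hq]
      have h2 : (Real.tanh a₂ - Real.tanh a₁) ^ 2 = (2 * |h₂ - h₁|) ^ 2 := by
        rw [e₁, e₂, mul_pow, sq_abs]; ring
      rw [h2] at hcsq
      have hts : |Real.tanh c - Real.tanh a₁| ≤ 2 * |h₂ - h₁| :=
        abs_le_of_sq_le_sq hcsq (by positivity)
      have hbc := _root_.abs_tanh_lt_one c
      have hb1 := _root_.abs_tanh_lt_one a₁
      have hsum : |Real.tanh a₁ + Real.tanh c| ≤ 2 := by
        calc |Real.tanh a₁ + Real.tanh c| ≤ |Real.tanh a₁| + |Real.tanh c| := abs_add_le _ _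
          _ ≤ 2 := by linarith
      have heq2 : 1 - Real.tanh c ^ 2 - (1 - Real.tanh a₁ ^ 2)
          = (Real.tanh a₁ + Real.tanh c) * (Real.tanh a₁ - Real.tanh c) := by ring
      rw [heq2, abs_mul, abs_sub_comm (Real.tanh a₁)]
      calc |Real.tanh a₁ + Real.tanh c| * |Real.tanh c - Real.tanh a₁|
          ≤ 2 * (2 * |h₂ - h₁|) :=
            mul_le_mul hsum hts (abs_nonneg _) (by norm_num)
        _ = 4 * |h₂ - h₁| := by ring
    · -- the identity
      rw [e₁, e₂] at hceq
      rw [ha₁, ha₂] at hceq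
      linear_combination hceq

lemma lip_lemma (β x₁ x₂ h₁ h₂ : ℝ) (hβ : 0 < β) (hx₁ : 0 ≤ x₁) (hx₂ : 0 ≤ x₂)
    (hh₁ : h₁ ∈ Set.Ioo (0 : ℝ) 1) (hh₂ : h₂ ∈ Set.Ioo (0 : ℝ) 1)
    (e₁ : Real.tanh (β * x₁ * h₁) = 1 - 2 * h₁)
    (e₂ : Real.tanh (β * x₂ * h₂) = 1 - 2 * h₂) :
    |h₂ - h₁| ≤ β / 2 * |x₂ - x₁| := by
  obtain ⟨p, hp0, hp1, -, heq⟩ := key_lemma β x₁ x₂ h₁ h₂ hβ hx₁ hx₂ hh₁ hh₂ e₁ e₂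
  have habs := congrArg abs heq
  rw [abs_mul, abs_mul, abs_neg] at habs
  have h2p : |2 + β * x₂ * p| = 2 + β * x₂ * p :=
    abs_of_pos (by nlinarith [mul_nonneg (mul_nonneg hβ.le hx₂) hp0.le])
  have hpb : |p * β * h₁| = p * β * h₁ := abs_of_pos (mul_pos (mul_pos hp0 hβ) hh₁.1)
  rw [h2p, hpb] at habs
  have k1 : 0 ≤ |h₂ - h₁| * (β * x₂ * p) :=
    mul_nonneg (abs_nonneg _) (mul_nonneg (mul_nonneg hβ.le hx₂) hp0.le)
  have k2 : p * β * h₁ ≤ β := by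
    nlinarith [mul_nonneg (sub_nonneg.2 hp1) hβ.le,
      mul_nonneg (mul_nonneg hp0.le hβ.le) (sub_nonneg.2 hh₁.2.le)]
  have k3 : p * β * h₁ * |x₂ - x₁| ≤ β * |x₂ - x₁| :=
    mul_le_mul_of_nonneg_right k2 (abs_nonneg _)
  nlinarith [k1, k3, habs]

lemma deriv_lemma (β : ℝ) (hβ : 0 < β) (h : ℝ → ℝ)
    (hprop : ∀ x ∈ Set.Icc (0 : ℝ) 1,
      h x ∈ Set.Ioo (0 : ℝ) 1 ∧ Real.tanh (β * x * h x) = 1 - 2 * h x)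
    (x : ℝ) (hx : x ∈ Set.Icc (0 : ℝ) 1) :
    HasDerivWithinAt h (-(β * h x) / (β * x + 2 * Real.cosh (β * x * h x) ^ 2))
      (Set.Icc 0 1) x := by
  obtain ⟨mx, ex⟩ := hprop x hx
  set H := h x with hH
  set q : ℝ := 1 / Real.cosh (β * x * H) ^ 2 with hqdef
  have hcosh := Real.cosh_pos (β * x * H)
  have hq0 : 0 < q := by positivity
  have hq1 : q ≤ 1 := by
    rw [hqdef, div_le_one (by positivity)]
    nlinarith [Real.one_le_cosh (β * x * H)]
  have hQ : 0 < 2 + β * x * q := by nlinarith [mul_nonneg (mul_nonneg hβ.le hx.1) hq0.le]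
  set D := -(β * H) / (β * x + 2 * Real.cosh (β * x * H) ^ 2) with hDdef
  have hden : 0 < β * x + 2 * Real.cosh (β * x * H) ^ 2 := by
    nlinarith [mul_nonneg hβ.le hx.1]
  have hQ' : (0:ℝ) < 2 + β * x * (1 / Real.cosh (β * x * H) ^ 2) := by
    have h5 : (0:ℝ) < 1 / Real.cosh (β * x * H) ^ 2 := by positivity
    nlinarith [mul_nonneg hβ.le hx.1, mul_nonneg (mul_nonneg hβ.le hx.1) h5.le]
  have hD' : D = -(q * β * H) / (2 + β * x * q) := by
    rw [hDdef, hqdef, div_eq_div_iff hden.ne' hQ'.ne']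
    field_simp
    ring
  clear_value H q D
  rw [hasDerivWithinAt_iff_tendsto_slope, Metric.tendsto_nhdsWithin_nhds]
  intro ε hε
  refine ⟨ε / (2 * β ^ 2 + 1), by positivity, ?_⟩
  intro x' hx' hdist
  obtain ⟨hx'I, hx'ne⟩ := hx'
  have hxx : x' - x ≠ 0 := sub_ne_zero.2 (by simpa using hx'ne)
  obtain ⟨mx', ex'⟩ := hprop x' hx'I
  obtain ⟨p, hp0, hp1, hpq, heq⟩ :=
    key_lemma β x x' H (h x') hβ hx.1 hx'I.1 mx mx' ex ex'
  rw [← hqdef] at hpq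
  have hP : 0 < 2 + β * x' * p := by
    nlinarith [mul_nonneg (mul_nonneg hβ.le hx'I.1) hp0.le]
  have hlip : |h x' - H| ≤ β / 2 * |x' - x| :=
    lip_lemma β x x' H (h x') hβ hx.1 hx'I.1 mx mx' ex ex'
  have hslope : slope h x x' = -(p * β * H) / (2 + β * x' * p) := by
    rw [slope_def_field, ← hH, div_eq_div_iff hxx hP.ne']
    linear_combination heq
  have hdiff : slope h x x' - D =
      β * H * (2 * (q - p) + β * p * q * (x' - x)) /
        ((2 + β * x' * p) * (2 + β * x * q)) := by
    rw [hslope, hD']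
    rw [div_sub_div _ _ hP.ne' hQ.ne']
    ring
  have hNbound : |2 * (q - p) + β * p * q * (x' - x)| ≤ 5 * β * |x' - x| := by
    have h1 : |2 * (q - p)| = 2 * |q - p| := by rw [abs_mul]; norm_num
    have h2 : |β * p * q * (x' - x)| = β * p * q * |x' - x| := by
      rw [abs_mul, abs_of_pos (by positivity)]
    have h3 : |q - p| ≤ 2 * β * |x' - x| := by
      rw [abs_sub_comm]
      calc |p - q| ≤ 4 * |h x' - H| := hpq
        _ ≤ 2 * β * |x' - x| := by linarith
    calc |2 * (q - p) + β * p * q * (x' - x)|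
        ≤ |2 * (q - p)| + |β * p * q * (x' - x)| := abs_add_le _ _
      _ = 2 * |q - p| + β * p * q * |x' - x| := by rw [h1, h2]
      _ ≤ 5 * β * |x' - x| := by
          have hpq1 : p * q ≤ 1 := le_trans (mul_le_of_le_one_right hp0.le hq1) hp1
          have h5 : β * p * q ≤ β := by
            calc β * p * q = β * (p * q) := by ring
              _ ≤ β := mul_le_of_le_one_right hβ.le hpq1
          have h4 : β * p * q * |x' - x| ≤ β * |x' - x| :=
            mul_le_mul_of_nonneg_right h5 (abs_nonneg _)
          linarith [h3, h4]
  have hPQ : 4 ≤ (2 + β * x' * p) * (2 + β * x * q) := by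
    nlinarith [mul_nonneg (mul_nonneg hβ.le hx'I.1) hp0.le,
      mul_nonneg (mul_nonneg hβ.le hx.1) hq0.le]
  have habs : |slope h x x' - D| ≤ 2 * β ^ 2 * |x' - x| := by
    rw [hdiff, abs_div, abs_of_pos (mul_pos hP hQ), div_le_iff₀ (mul_pos hP hQ)]
    have hnum : |β * H * (2 * (q - p) + β * p * q * (x' - x))|
        ≤ β * (5 * β * |x' - x|) := by
      rw [abs_mul, abs_mul, abs_of_pos hβ, abs_of_pos mx.1]
      calc β * H * |2 * (q - p) + β * p * q * (x' - x)|
          ≤ β * 1 * |2 * (q - p) + β * p * q * (x' - x)| :=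
            mul_le_mul_of_nonneg_right
              (mul_le_mul_of_nonneg_left mx.2.le hβ.le) (abs_nonneg _)
        _ = β * |2 * (q - p) + β * p * q * (x' - x)| := by ring
        _ ≤ β * (5 * β * |x' - x|) := mul_le_mul_of_nonneg_left hNbound hβ.le
    calc |β * H * (2 * (q - p) + β * p * q * (x' - x))|
        ≤ β * (5 * β * |x' - x|) := hnum
      _ ≤ 2 * β ^ 2 * |x' - x| * 4 := by
          have h8 : 0 ≤ β * β * |x' - x| :=
            mul_nonneg (mul_nonneg hβ.le hβ.le) (abs_nonneg _)
          have h9 : 2 * β ^ 2 * |x' - x| * 4 - β * (5 * β * |x' - x|)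
              = 3 * (β * β * |x' - x|) := by ring
          linarith [h8, h9.ge]
      _ ≤ 2 * β ^ 2 * |x' - x| * ((2 + β * x' * p) * (2 + β * x * q)) :=
          mul_le_mul_of_nonneg_left hPQ (by positivity)
  rw [Real.dist_eq] at hdist ⊢
  have hfin : |x' - x| * (2 * β ^ 2 + 1) < ε :=
    (lt_div_iff₀ (by positivity)).1 hdist
  calc |slope h x x' - D| ≤ 2 * β ^ 2 * |x' - x| := habs
    _ < ε := by
      have h9 : |x' - x| * (2 * β ^ 2 + 1) - 2 * β ^ 2 * |x' - x| = |x' - x| := by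
        ring
      linarith [abs_nonneg (x' - x), hfin]

theorem stmt_13 (β : ℝ) (hβ : 0 < β) :
    (∀ x ∈ Set.Icc (0 : ℝ) 1,
      ∃! y : ℝ, y ∈ Set.Ioo (0 : ℝ) 1 ∧ Real.tanh (β * x * y) = 1 - 2 * y) ∧
    (∀ h : ℝ → ℝ,
      (∀ x ∈ Set.Icc (0 : ℝ) 1,
        h x ∈ Set.Ioo (0 : ℝ) 1 ∧ Real.tanh (β * x * h x) = 1 - 2 * h x) →
      h 0 = 1 / 2 ∧ AntitoneOn h (Set.Icc 0 1) ∧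
      ∀ x ∈ Set.Icc (0 : ℝ) 1,
        HasDerivWithinAt h
          (-(β * h x) / (β * x + 2 * Real.cosh (β * x * h x) ^ 2)) (Set.Icc 0 1) x ∧
        -(β * h x) / (β * x + 2 * Real.cosh (β * x * h x) ^ 2) ≥ -β / 2) := by
  constructor
  · intro x hx
    exact exists_unique_sol β x hβ hx.1
  · intro h hprop
    have h0 : h 0 = 1 / 2 := by
      obtain ⟨hmem, heq⟩ := hprop 0 (by norm_num)
      rw [mul_zero, zero_mul, Real.tanh_zero] at heq
      linarith
    have hanti : AntitoneOn h (Set.Icc 0 1) := by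
      intro x₁ hx₁ x₂ hx₂ hle
      obtain ⟨m₁, e₁⟩ := hprop x₁ hx₁
      obtain ⟨m₂, e₂⟩ := hprop x₂ hx₂
      obtain ⟨p, hp0, hp1, -, heq⟩ :=
        key_lemma β x₁ x₂ (h x₁) (h x₂) hβ hx₁.1 hx₂.1 m₁ m₂ e₁ e₂
      have hpos : 0 < 2 + β * x₂ * p := by
        nlinarith [mul_nonneg (mul_nonneg hβ.le hx₂.1) hp0.le]
      have hRHS : -(p * β * h x₁) * (x₂ - x₁) ≤ 0 := by
        have h1 : 0 ≤ p * β * h x₁ * (x₂ - x₁) :=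
          mul_nonneg (mul_nonneg (mul_nonneg hp0.le hβ.le) m₁.1.le)
            (sub_nonneg.2 hle)
        linarith
      nlinarith [heq, hpos, hRHS]
    refine ⟨h0, hanti, fun x hx => ⟨deriv_lemma β hβ h hprop x hx, ?_⟩⟩
    obtain ⟨m, -⟩ := hprop x hx
    have hcosh := Real.one_le_cosh (β * x * h x)
    have hD : 0 < β * x + 2 * Real.cosh (β * x * h x) ^ 2 := by
      nlinarith [mul_nonneg hβ.le hx.1]
    rw [ge_iff_le]
    have hkey : β * h x / (β * x + 2 * Real.cosh (β * x * h x) ^ 2) ≤ β / 2 := by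
      rw [div_le_div_iff₀ hD (by norm_num : (0:ℝ) < 2)]
      have hc2 : 1 ≤ Real.cosh (β * x * h x) ^ 2 := by nlinarith [hcosh]
      nlinarith [m.1, m.2, mul_le_mul_of_nonneg_left m.2.le hβ.le,
        mul_le_mul_of_nonneg_left hc2 hβ.le,
        mul_nonneg hβ.le (mul_nonneg hβ.le hx.1)]
    calc -β / 2 = -(β / 2) := neg_div _ _
      _ ≤ -(β * h x / (β * x + 2 * Real.cosh (β * x * h x) ^ 2)) :=
          neg_le_neg hkey
      _ = -(β * h x) / (β * x + 2 * Real.cosh (β * x * h x) ^ 2) := (neg_div _ _).symm
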